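/- arXiv:1609.06806 — 2 statements merged into one kernel-verified Lean document; each statement's English description precedes it below -/
import Mathlib

section
/- For matrices D1, D2 in R^{s×r} with Frobenius norm at most 1, and A1, A2 in R^{q×r} with orthonormal columns (A_i^T A_i = I_r), the Frobenius norm of D1 A1^T - D2 A2^T is at most the operator norm of A1 A1^T - A2 A2^T plus the Frobenius norm of D1 A1^T A2 - D2. -/
open scoped BigOperators
open Matrix

/-- Frobenius norm of a real matrix. -/
noncomputable def frob {a b : ℕ} (M : Matrix (Fin a) (Fin b) ℝ) : ℝ :=
  Real.sqrt (∑ i, ∑ j, (M i j) ^ 2)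

/-- Euclidean norm of the `j`-th row of a matrix. -/
noncomputable def rnorm {a b : ℕ} (M : Matrix (Fin a) (Fin b) ℝ) (j : Fin a) : ℝ :=
  Real.sqrt (∑ k, (M j k) ^ 2)

/-- Operator (spectral) norm of a real matrix: the largest singular value. -/
noncomputable def opN {a b : ℕ} (M : Matrix (Fin a) (Fin b) ℝ) : ℝ :=
  sSup {c : ℝ | ∃ v : Fin b → ℝ, (∑ j, (v j) ^ 2) ≤ 1 ∧
    c = Real.sqrt (∑ i, (M.mulVec v i) ^ 2)}

lemma frob_nonneg {a b : ℕ} (M : Matrix (Fin a) (Fin b) ℝ) : 0 ≤ frob M :=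
  Real.sqrt_nonneg _

lemma frob_sq {a b : ℕ} (M : Matrix (Fin a) (Fin b) ℝ) :
    frob M ^ 2 = ∑ i, ∑ j, (M i j) ^ 2 := by
  apply Real.sq_sqrt
  positivity

lemma frob_eq_norm {a b : ℕ} (M : Matrix (Fin a) (Fin b) ℝ) :
    frob M = ‖(EuclideanSpace.equiv (Fin a × Fin b) ℝ).symm (fun p => M p.1 p.2)‖ := by
  simp [frob, EuclideanSpace.norm_eq, Fintype.sum_prod_type, sq_abs]

lemma frob_add_le {a b : ℕ} (M N : Matrix (Fin a) (Fin b) ℝ) :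
    frob (M + N) ≤ frob M + frob N := by
  have h := norm_add_le ((EuclideanSpace.equiv (Fin a × Fin b) ℝ).symm (fun p => M p.1 p.2))
      ((EuclideanSpace.equiv (Fin a × Fin b) ℝ).symm (fun p => N p.1 p.2))
  rw [frob_eq_norm, frob_eq_norm, frob_eq_norm]
  convert h using 2
  · rfl
  · ext p
    simp

lemma opN_set_nonempty {a b : ℕ} (M : Matrix (Fin a) (Fin b) ℝ) :
    (0:ℝ) ∈ {c : ℝ | ∃ v : Fin b → ℝ, (∑ j, (v j) ^ 2) ≤ 1 ∧
      c = Real.sqrt (∑ i, (M.mulVec v i) ^ 2)} := by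
  refine ⟨0, by simp, ?_⟩
  simp [Matrix.mulVec_zero]

lemma opN_set_bdd {a b : ℕ} (M : Matrix (Fin a) (Fin b) ℝ) :
    BddAbove {c : ℝ | ∃ v : Fin b → ℝ, (∑ j, (v j) ^ 2) ≤ 1 ∧
      c = Real.sqrt (∑ i, (M.mulVec v i) ^ 2)} := by
  refine ⟨frob M, ?_⟩
  rintro c ⟨v, hv, rfl⟩
  have hle : ∑ i, (M.mulVec v i) ^ 2 ≤ ∑ i, ∑ j, (M i j) ^ 2 := by
    apply Finset.sum_le_sum
    intro i _
    have h1 : (M.mulVec v i) ^ 2 ≤ (∑ j, (M i j)^2) * (∑ j, (v j)^2) := by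
      have := Finset.sum_mul_sq_le_sq_mul_sq Finset.univ (fun j => M i j) v
      simpa [Matrix.mulVec, dotProduct] using this
    calc (M.mulVec v i) ^ 2 ≤ (∑ j, (M i j)^2) * (∑ j, (v j)^2) := h1
      _ ≤ (∑ j, (M i j)^2) * 1 := by
          apply mul_le_mul_of_nonneg_left hv; positivity
      _ = ∑ j, (M i j)^2 := mul_one _
  exact Real.sqrt_le_sqrt hle

lemma opN_nonneg {a b : ℕ} (M : Matrix (Fin a) (Fin b) ℝ) : 0 ≤ opN M :=
  le_csSup (opN_set_bdd M) (opN_set_nonempty M)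

lemma sqrt_mulVec_le {a b : ℕ} (M : Matrix (Fin a) (Fin b) ℝ) (v : Fin b → ℝ) :
    Real.sqrt (∑ i, (M.mulVec v i) ^ 2) ≤ opN M * Real.sqrt (∑ j, (v j) ^ 2) := by
  by_cases h0 : ∑ j, (v j) ^ 2 = 0
  · have hv : v = 0 := by
      funext j
      have := (Finset.sum_eq_zero_iff_of_nonneg (fun j _ => sq_nonneg (v j))).mp h0 j
        (Finset.mem_univ j)
      exact pow_eq_zero_iff (by norm_num) |>.mp this
    simp [hv, Matrix.mulVec_zero, h0]
  · have hpos : 0 < ∑ j, (v j) ^ 2 := lt_of_le_of_ne (by positivity) (Ne.symm h0)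
    set t := Real.sqrt (∑ j, (v j) ^ 2) with ht
    have htpos : 0 < t := Real.sqrt_pos.mpr hpos
    set w : Fin b → ℝ := fun j => v j / t with hw
    have hw1 : ∑ j, (w j) ^ 2 = 1 := by
      simp only [hw, div_pow]
      rw [← Finset.sum_div]
      rw [Real.sq_sqrt hpos.le]
      exact div_self h0
    have hmem : Real.sqrt (∑ i, (M.mulVec w i) ^ 2) ∈ {c : ℝ | ∃ u : Fin b → ℝ,
        (∑ j, (u j) ^ 2) ≤ 1 ∧ c = Real.sqrt (∑ i, (M.mulVec u i) ^ 2)} :=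
      ⟨w, hw1.le, rfl⟩
    have hle : Real.sqrt (∑ i, (M.mulVec w i) ^ 2) ≤ opN M :=
      le_csSup (opN_set_bdd M) hmem
    have hv : v = t • w := by
      funext j; simp [hw, Pi.smul_apply, smul_eq_mul, mul_div_cancel₀ _ htpos.ne']
    have hmv : ∀ i, M.mulVec v i = t * M.mulVec w i := by
      intro i
      rw [hv, Matrix.mulVec_smul]
      simp [smul_eq_mul]
    calc Real.sqrt (∑ i, (M.mulVec v i) ^ 2)
        = Real.sqrt (t^2 * ∑ i, (M.mulVec w i) ^ 2) := by
          congr 1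
          rw [Finset.mul_sum]
          exact Finset.sum_congr rfl fun i _ => by rw [hmv i]; ring
      _ = t * Real.sqrt (∑ i, (M.mulVec w i) ^ 2) := by
          rw [Real.sqrt_mul (sq_nonneg t), Real.sqrt_sq htpos.le]
      _ ≤ t * opN M := by
          apply mul_le_mul_of_nonneg_left hle htpos.le
      _ = opN M * t := mul_comm _ _

lemma sum_sq_mulVec {q r : ℕ} (A : Matrix (Fin q) (Fin r) ℝ) (hA : Aᵀ * A = 1)
    (v : Fin r → ℝ) : ∑ j, (A.mulVec v j) ^ 2 = ∑ k, (v k) ^ 2 := by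
  have h : ∀ k l, ∑ j, A j k * A j l = if k = l then 1 else 0 := by
    intro k l
    have := congrFun (congrFun hA k) l
    simpa [Matrix.mul_apply, Matrix.transpose_apply, Matrix.one_apply] using this
  calc ∑ j, (A.mulVec v j) ^ 2
      = ∑ j, ∑ k, ∑ l, (A j k * v k) * (A j l * v l) := by
        apply Finset.sum_congr rfl
        intro j _
        rw [sq]
        simp [Matrix.mulVec, dotProduct, Finset.sum_mul_sum]
    _ = ∑ k, ∑ l, (v k * v l) * ∑ j, A j k * A j l := by
        rw [Finset.sum_comm]
        apply Finset.sum_congr rfl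
        intro k _
        rw [Finset.sum_comm]
        apply Finset.sum_congr rfl
        intro l _
        rw [Finset.mul_sum]
        apply Finset.sum_congr rfl
        intro j _
        ring
    _ = ∑ k, (v k) ^ 2 := by
        apply Finset.sum_congr rfl
        intro k _
        simp only [h, mul_ite, mul_one, mul_zero, Finset.sum_ite_eq, Finset.mem_univ,
          if_true]
        ring

lemma frob_mul_orth {s r q : ℕ} (M : Matrix (Fin s) (Fin r) ℝ)
    (A : Matrix (Fin q) (Fin r) ℝ) (hA : Aᵀ * A = 1) :
    frob (M * Aᵀ) = frob M := by
  unfold frob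
  congr 1
  apply Finset.sum_congr rfl
  intro i _
  have : ∀ j, (M * Aᵀ) i j = A.mulVec (fun k => M i k) j := by
    intro j
    simp [Matrix.mul_apply, Matrix.mulVec, dotProduct, Matrix.transpose_apply, mul_comm]
  simp only [this]
  exact sum_sq_mulVec A hA (fun k => M i k)

lemma frob_mul_le {s q : ℕ} {a : ℕ} (X : Matrix (Fin s) (Fin q) ℝ)
    (B : Matrix (Fin q) (Fin a) ℝ) :
    frob (X * B) ≤ frob X * opN Bᵀ := by
  have hsq : frob (X * B) ^ 2 ≤ (frob X * opN Bᵀ) ^ 2 := by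
    rw [frob_sq, mul_pow, frob_sq]
    calc ∑ i, ∑ j, ((X * B) i j) ^ 2
        ≤ ∑ i, (opN Bᵀ ^ 2 * ∑ k, (X i k) ^ 2) := by
          apply Finset.sum_le_sum
          intro i _
          have hrow : ∀ j, (X * B) i j = Bᵀ.mulVec (fun k => X i k) j := by
            intro j
            simp [Matrix.mul_apply, Matrix.mulVec, dotProduct, Matrix.transpose_apply, mul_comm]
          have h1 := sqrt_mulVec_le Bᵀ (fun k => X i k)
          have h2 : ∑ j, (Bᵀ.mulVec (fun k => X i k) j) ^ 2 ≤
              opN Bᵀ ^ 2 * ∑ k, (X i k) ^ 2 := by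
            have hnn : (0:ℝ) ≤ ∑ j, (Bᵀ.mulVec (fun k => X i k) j) ^ 2 := by positivity
            calc ∑ j, (Bᵀ.mulVec (fun k => X i k) j) ^ 2
                = Real.sqrt (∑ j, (Bᵀ.mulVec (fun k => X i k) j) ^ 2) *
                  Real.sqrt (∑ j, (Bᵀ.mulVec (fun k => X i k) j) ^ 2) := by
                  rw [Real.mul_self_sqrt hnn]
              _ ≤ (opN Bᵀ * Real.sqrt (∑ k, (X i k)^2)) *
                  (opN Bᵀ * Real.sqrt (∑ k, (X i k)^2)) :=
                  mul_self_le_mul_self (Real.sqrt_nonneg _) h1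
              _ = opN Bᵀ ^ 2 * (Real.sqrt (∑ k, (X i k)^2) * Real.sqrt (∑ k, (X i k)^2)) := by
                  ring
              _ = opN Bᵀ ^ 2 * ∑ k, (X i k) ^ 2 := by
                  rw [Real.mul_self_sqrt (by positivity)]
          simpa only [hrow] using h2
      _ = (∑ i, ∑ k, (X i k) ^ 2) * opN Bᵀ ^ 2 := by
          rw [← Finset.mul_sum, mul_comm]
  have h2 : 0 ≤ frob X * opN Bᵀ := mul_nonneg (frob_nonneg _) (opN_nonneg _)
  nlinarith [frob_nonneg (X * B)]

theorem stmt0 {s r q : ℕ} (D1 D2 : Matrix (Fin s) (Fin r) ℝ)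
    (A1 A2 : Matrix (Fin q) (Fin r) ℝ)
    (hD1 : frob D1 ≤ 1) (hD2 : frob D2 ≤ 1)
    (hA1 : A1ᵀ * A1 = 1) (hA2 : A2ᵀ * A2 = 1) :
    frob (D1 * A1ᵀ - D2 * A2ᵀ) ≤
      opN (A1 * A1ᵀ - A2 * A2ᵀ) + frob (D1 * A1ᵀ * A2 - D2) := by
  have key : D1 * A1ᵀ - D2 * A2ᵀ =
      D1 * A1ᵀ * (A1 * A1ᵀ - A2 * A2ᵀ) + (D1 * A1ᵀ * A2 - D2) * A2ᵀ := by
    have h1 : D1 * A1ᵀ * (A1 * A1ᵀ) = D1 * A1ᵀ := by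
      rw [← Matrix.mul_assoc, Matrix.mul_assoc D1 A1ᵀ A1, hA1, Matrix.mul_one]
    rw [Matrix.mul_sub, Matrix.sub_mul, h1, Matrix.mul_assoc (D1 * A1ᵀ) A2 A2ᵀ]
    abel
  rw [key]
  have htri := frob_add_le (D1 * A1ᵀ * (A1 * A1ᵀ - A2 * A2ᵀ)) ((D1 * A1ᵀ * A2 - D2) * A2ᵀ)
  have hsymm : (A1 * A1ᵀ - A2 * A2ᵀ)ᵀ = A1 * A1ᵀ - A2 * A2ᵀ := by
    simp [Matrix.transpose_sub, Matrix.transpose_mul]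
  have h1 : frob (D1 * A1ᵀ * (A1 * A1ᵀ - A2 * A2ᵀ)) ≤ opN (A1 * A1ᵀ - A2 * A2ᵀ) := by
    calc frob (D1 * A1ᵀ * (A1 * A1ᵀ - A2 * A2ᵀ))
        ≤ frob (D1 * A1ᵀ) * opN ((A1 * A1ᵀ - A2 * A2ᵀ)ᵀ) := frob_mul_le _ _
      _ = frob D1 * opN (A1 * A1ᵀ - A2 * A2ᵀ) := by rw [hsymm, frob_mul_orth D1 A1 hA1]
      _ ≤ 1 * opN (A1 * A1ᵀ - A2 * A2ᵀ) :=
          mul_le_mul_of_nonneg_right hD1 (opN_nonneg _)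
      _ = opN (A1 * A1ᵀ - A2 * A2ᵀ) := one_mul _
  have h2 : frob ((D1 * A1ᵀ * A2 - D2) * A2ᵀ) = frob (D1 * A1ᵀ * A2 - D2) :=
    frob_mul_orth _ A2 hA2
  linarith
end

section
/- The set of q×r real matrices with orthonormal columns, equipped with the metric d(A1, A2) = ‖A1A1^T − A2A2^T‖_op, together with the unit Frobenius ball of s×r matrices, yields via (D, A) ↦ D A^T a surjection onto the set of s×q matrices of rank ≤ r and Frobenius norm ≤ 1, and this map is 2-Lipschitz in the sense that ‖D1A1^T − D2A2^T‖_F ≤ d(A1,A2) + ‖D1A1^TA2 − D2‖_F ≤ d(A1,A2) + ‖D1 − D2‖_F + ‖D1‖_F·σ_max(A1^TA2 − I_r). -/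
open scoped BigOperators
open Matrix

namespace Aux
open Module Submodule


noncomputable def emb {a b : ℕ} (M : Matrix (Fin a) (Fin b) ℝ) :
    EuclideanSpace ℝ (Fin a × Fin b) :=
  (WithLp.equiv 2 _).symm (fun p => M p.1 p.2)

lemma frob_eq_norm {a b : ℕ} (M : Matrix (Fin a) (Fin b) ℝ) : frob M = ‖emb M‖ := by
  rw [EuclideanSpace.norm_eq]
  simp [frob, emb, Fintype.sum_prod_type, Real.norm_eq_abs, sq_abs]

lemma emb_sub {a b : ℕ} (M N : Matrix (Fin a) (Fin b) ℝ) :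
    emb (M - N) = emb M - emb N := rfl

lemma emb_add {a b : ℕ} (M N : Matrix (Fin a) (Fin b) ℝ) :
    emb (M + N) = emb M + emb N := rfl

lemma frob_nonneg {a b : ℕ} (M : Matrix (Fin a) (Fin b) ℝ) : 0 ≤ frob M :=
  Real.sqrt_nonneg _

lemma frob_add_le {a b : ℕ} (M N : Matrix (Fin a) (Fin b) ℝ) :
    frob (M + N) ≤ frob M + frob N := by
  rw [frob_eq_norm, frob_eq_norm, frob_eq_norm, emb_add]; exact norm_add_le _ _

lemma sum_sq_row {a b : ℕ} (M : Matrix (Fin a) (Fin b) ℝ) (i : Fin a) :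
    ∑ j, (M i j) ^ 2 = (M * Mᵀ) i i := by
  simp [Matrix.mul_apply, sq]

lemma frob_mul_orth {a b c : ℕ} (X : Matrix (Fin a) (Fin c) ℝ)
    (A : Matrix (Fin b) (Fin c) ℝ) (hA : Aᵀ * A = 1) :
    frob (X * Aᵀ) = frob X := by
  unfold frob
  congr 1
  have h : ∀ i, ∑ j, ((X * Aᵀ) i j) ^ 2 = ∑ j, (X i j) ^ 2 := by
    intro i
    rw [sum_sq_row, sum_sq_row]
    have : X * Aᵀ * (X * Aᵀ)ᵀ = X * Xᵀ := by
      rw [Matrix.transpose_mul, Matrix.transpose_transpose, Matrix.mul_assoc,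
        ← Matrix.mul_assoc Aᵀ A Xᵀ, hA, Matrix.one_mul]
    rw [this]
  exact Finset.sum_congr rfl (fun i _ => h i)



def opSet {a b : ℕ} (M : Matrix (Fin a) (Fin b) ℝ) : Set ℝ :=
  {c : ℝ | ∃ v : Fin b → ℝ, (∑ j, (v j) ^ 2) ≤ 1 ∧
    c = Real.sqrt (∑ i, (M.mulVec v i) ^ 2)}

lemma opN_eq {a b : ℕ} (M : Matrix (Fin a) (Fin b) ℝ) : opN M = sSup (opSet M) := rfl

lemma zero_mem_opSet {a b : ℕ} (M : Matrix (Fin a) (Fin b) ℝ) : (0:ℝ) ∈ opSet M := by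
  refine ⟨0, by simp, ?_⟩
  simp [Matrix.mulVec_zero]

lemma opSet_bdd {a b : ℕ} (M : Matrix (Fin a) (Fin b) ℝ) :
    ∀ c ∈ opSet M, c ≤ frob M := by
  rintro c ⟨v, hv, rfl⟩
  rw [frob]
  apply Real.sqrt_le_sqrt
  apply Finset.sum_le_sum
  intro i _
  have cs := Finset.sum_mul_sq_le_sq_mul_sq Finset.univ (fun j => M i j) v
  have h1 : (M.mulVec v i) ^ 2 ≤ (∑ j, (M i j)^2) * (∑ j, (v j)^2) := by
    simpa [Matrix.mulVec, dotProduct] using cs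
  calc (M.mulVec v i) ^ 2 ≤ (∑ j, (M i j)^2) * (∑ j, (v j)^2) := h1
    _ ≤ (∑ j, (M i j)^2) * 1 := by
        apply mul_le_mul_of_nonneg_left hv (Finset.sum_nonneg fun _ _ => sq_nonneg _)
    _ = ∑ j, (M i j)^2 := mul_one _

lemma opSet_bddAbove {a b : ℕ} (M : Matrix (Fin a) (Fin b) ℝ) : BddAbove (opSet M) :=
  ⟨frob M, fun c hc => opSet_bdd M c hc⟩

lemma opN_nonneg {a b : ℕ} (M : Matrix (Fin a) (Fin b) ℝ) : 0 ≤ opN M :=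
  le_csSup (opSet_bddAbove M) (zero_mem_opSet M)

lemma opN_le_frob {a b : ℕ} (M : Matrix (Fin a) (Fin b) ℝ) : opN M ≤ frob M :=
  csSup_le ⟨0, zero_mem_opSet M⟩ (opSet_bdd M)

lemma sqrt_mulVec_le {a b : ℕ} (M : Matrix (Fin a) (Fin b) ℝ) (v : Fin b → ℝ)
    (hv : (∑ j, (v j) ^ 2) ≤ 1) :
    Real.sqrt (∑ i, (M.mulVec v i) ^ 2) ≤ opN M :=
  le_csSup (opSet_bddAbove M) ⟨v, hv, rfl⟩

lemma sqrt_smul_sum {n : ℕ} (c : ℝ) (hc : 0 ≤ c) (w : Fin n → ℝ) :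
    Real.sqrt (∑ i, ((c • w) i) ^ 2) = c * Real.sqrt (∑ i, (w i) ^ 2) := by
  have h1 : (∑ i, ((c • w) i) ^ 2) = c^2 * ∑ i, (w i)^2 := by
    simp [Finset.mul_sum, mul_pow]
  rw [h1, Real.sqrt_mul (by positivity), Real.sqrt_sq hc]

/-- general homogeneous bound -/
lemma sqrt_mulVec_le' {a b : ℕ} (M : Matrix (Fin a) (Fin b) ℝ) (v : Fin b → ℝ) :
    Real.sqrt (∑ i, (M.mulVec v i) ^ 2) ≤ opN M * Real.sqrt (∑ j, (v j) ^ 2) := by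
  rcases eq_or_ne v 0 with rfl | hv
  · simp [Matrix.mulVec_zero]
  · obtain ⟨j, hj⟩ := Function.ne_iff.mp hv
    have hSpos : 0 < ∑ j, (v j)^2 :=
      Finset.sum_pos' (fun k _ => sq_nonneg _) ⟨j, Finset.mem_univ j, pow_two_pos_of_ne_zero hj⟩
    have htpos : 0 < Real.sqrt (∑ j, (v j)^2) := Real.sqrt_pos.2 hSpos
    have hw : (∑ j, (((Real.sqrt (∑ j, (v j)^2))⁻¹ • v) j) ^ 2) ≤ 1 := by
      have h1 : (∑ j, (((Real.sqrt (∑ j, (v j)^2))⁻¹ • v) j) ^ 2)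
          = ((Real.sqrt (∑ j, (v j)^2))⁻¹)^2 * ∑ j, (v j)^2 := by
        simp [Finset.mul_sum, mul_pow]
      rw [h1, inv_pow, Real.sq_sqrt hSpos.le, inv_mul_cancel₀ hSpos.ne']
    have hle := sqrt_mulVec_le M _ hw
    rw [Matrix.mulVec_smul, sqrt_smul_sum _ (by positivity)] at hle
    have h2 : Real.sqrt (∑ i, (M.mulVec v i) ^ 2)
        = Real.sqrt (∑ j, (v j)^2) *
          ((Real.sqrt (∑ j, (v j)^2))⁻¹ * Real.sqrt (∑ i, (M.mulVec v i) ^ 2)) := by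
      field_simp
    rw [h2, mul_comm (opN M)]
    exact mul_le_mul_of_nonneg_left hle htpos.le

lemma opN_transpose_le {a b : ℕ} (M : Matrix (Fin a) (Fin b) ℝ) : opN Mᵀ ≤ opN M := by
  apply csSup_le ⟨0, zero_mem_opSet Mᵀ⟩
  rintro c ⟨v, hv, rfl⟩
  have hu : ∀ i, Mᵀ.mulVec v i = ∑ j, M j i * v j := by
    intro i; simp [Matrix.mulVec, dotProduct, Matrix.transpose_apply]
  rcases eq_or_lt_of_le (Real.sqrt_nonneg (∑ i, (Mᵀ.mulVec v i) ^ 2)) with h0 | hpos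
  · rw [← h0]; exact opN_nonneg M
  · have ht2 : (Real.sqrt (∑ i, (Mᵀ.mulVec v i) ^ 2))^2 = ∑ i, (Mᵀ.mulVec v i)^2 :=
      Real.sq_sqrt (Finset.sum_nonneg fun _ _ => sq_nonneg _)
    have key : ∑ i, (Mᵀ.mulVec v i)^2 = ∑ j, v j * (M.mulVec (Mᵀ.mulVec v) j) := by
      simp only [Matrix.mulVec, dotProduct, Matrix.transpose_apply, Finset.mul_sum, sq]
      rw [Finset.sum_comm]
      apply Finset.sum_congr rfl; intro j _
      apply Finset.sum_congr rfl; intro x _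
      rw [Finset.sum_mul]
      apply Finset.sum_congr rfl; intro i _
      ring
    have cs : ∑ j, v j * (M.mulVec (Mᵀ.mulVec v) j) ≤
        Real.sqrt (∑ j, (v j)^2) * Real.sqrt (∑ j, (M.mulVec (Mᵀ.mulVec v) j)^2) :=
      Real.sum_mul_le_sqrt_mul_sqrt _ _ _
    have h1 : Real.sqrt (∑ j, (v j)^2) ≤ 1 := by
      rw [show (1:ℝ) = Real.sqrt 1 by simp]
      exact Real.sqrt_le_sqrt hv
    have h2 := sqrt_mulVec_le' M (Mᵀ.mulVec v)
    have hfin : (Real.sqrt (∑ i, (Mᵀ.mulVec v i) ^ 2))^2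
        ≤ opN M * Real.sqrt (∑ i, (Mᵀ.mulVec v i) ^ 2) := by
      calc (Real.sqrt (∑ i, (Mᵀ.mulVec v i) ^ 2))^2
          = ∑ j, v j * (M.mulVec (Mᵀ.mulVec v) j) := by rw [ht2, key]
        _ ≤ Real.sqrt (∑ j, (v j)^2) * Real.sqrt (∑ j, (M.mulVec (Mᵀ.mulVec v) j)^2) := cs
        _ ≤ 1 * (opN M * Real.sqrt (∑ i, (Mᵀ.mulVec v i) ^ 2)) := by
            apply mul_le_mul h1 h2 (Real.sqrt_nonneg _)  zero_le_one
        _ = opN M * Real.sqrt (∑ i, (Mᵀ.mulVec v i) ^ 2) := one_mul _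
    nlinarith [hfin, hpos]


lemma frob_mul_le {a b c : ℕ} (M : Matrix (Fin a) (Fin b) ℝ) (B : Matrix (Fin b) (Fin c) ℝ) :
    frob (M * B) ≤ frob M * opN B := by
  have hrow : ∀ (i : Fin a) (j : Fin c), (M * B) i j = Bᵀ.mulVec (M i) j := by
    intro i j
    simp [Matrix.mul_apply, Matrix.mulVec, dotProduct, Matrix.transpose_apply, mul_comm]
  have hb : ∀ i, (∑ j, ((M * B) i j)^2) ≤ (opN B)^2 * ∑ k, (M i k)^2 := by
    intro i
    have h3 : Real.sqrt (∑ j, (Bᵀ.mulVec (M i) j)^2)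
        ≤ opN B * Real.sqrt (∑ k, (M i k)^2) :=
      (sqrt_mulVec_le' Bᵀ (M i)).trans
        (mul_le_mul_of_nonneg_right (opN_transpose_le B) (Real.sqrt_nonneg _))
    calc ∑ j, ((M * B) i j)^2 = ∑ j, (Bᵀ.mulVec (M i) j)^2 := by
          apply Finset.sum_congr rfl; intro j _; rw [hrow]
      _ = (Real.sqrt (∑ j, (Bᵀ.mulVec (M i) j)^2))^2 :=
          (Real.sq_sqrt (Finset.sum_nonneg fun _ _ => sq_nonneg _)).symm
      _ ≤ (opN B * Real.sqrt (∑ k, (M i k)^2))^2 :=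
          pow_le_pow_left₀ (Real.sqrt_nonneg _) h3 2
      _ = (opN B)^2 * ∑ k, (M i k)^2 := by
          rw [mul_pow, Real.sq_sqrt (Finset.sum_nonneg fun _ _ => sq_nonneg _)]
  unfold frob
  calc Real.sqrt (∑ i, ∑ j, ((M * B) i j)^2)
      ≤ Real.sqrt (∑ i, (opN B)^2 * ∑ k, (M i k)^2) :=
        Real.sqrt_le_sqrt (Finset.sum_le_sum fun i _ => hb i)
    _ = opN B * Real.sqrt (∑ i, ∑ k, (M i k)^2) := by
        rw [← Finset.mul_sum, Real.sqrt_mul (sq_nonneg _), Real.sqrt_sq (opN_nonneg B)]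
    _ = Real.sqrt (∑ i, ∑ k, (M i k)^2) * opN B := mul_comm _ _
lemma surj {s q r : ℕ} (hrq : r ≤ q) (C : Matrix (Fin s) (Fin q) ℝ)
    (hrank : C.rank ≤ r) (hfro : frob C ≤ 1) :
    ∃ (D : Matrix (Fin s) (Fin r) ℝ) (A : Matrix (Fin q) (Fin r) ℝ),
      frob D ≤ 1 ∧ Aᵀ * A = 1 ∧ C = D * Aᵀ := by
  classical
  set E := EuclideanSpace ℝ (Fin q)
  set row : Fin s → E := fun i => (WithLp.equiv 2 (Fin q → ℝ)).symm (C i) with hrow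
  set W : Submodule ℝ E := Submodule.span ℝ (Set.range row) with hW
  set k := finrank ℝ W with hk
  -- k ≤ r
  have hkr : k ≤ r := by
    have h1 : W = Submodule.map (show (Fin q → ℝ) ≃ₗ[ℝ] E from (WithLp.linearEquiv 2 ℝ (Fin q → ℝ)).symm).toLinearMap
        (Submodule.span ℝ (Set.range (fun i => C i))) := by
      rw [Submodule.map_span]
      congr 1
      rw [← Set.range_comp]
      rfl
    have h2 : k = finrank ℝ (Submodule.span ℝ (Set.range (fun i => C i))) := by
      rw [hk, h1]
      exact LinearEquiv.finrank_map_eq _ _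
    have h3 : finrank ℝ (Submodule.span ℝ (Set.range (fun i => C i))) = Cᵀ.rank := by
      rw [Matrix.rank_eq_finrank_span_cols]
      rfl
    rw [h2, h3, Matrix.rank_transpose]
    exact hrank
  -- orthonormal basis of W, coerced to E
  have hkq : k ≤ q := hkr.trans hrq
  set b0 := stdOrthonormalBasis ℝ W with hb0
  set w : Fin k → E := fun i => (W.subtypeₗᵢ) (b0 i) with hw
  have hwo : Orthonormal ℝ w := b0.orthonormal.comp_linearIsometry _
  -- span of w is W
  have hWspan : Submodule.span ℝ (Set.range w) = W := by
    have h1 : Set.range w = (W.subtype) '' (Set.range b0) := by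
      rw [← Set.range_comp]; rfl
    rw [h1, ← Submodule.map_span]
    have h2 : Submodule.span ℝ (Set.range ⇑b0) = ⊤ := by
      rw [← b0.coe_toBasis]; exact b0.toBasis.span_eq
    rw [h2, Submodule.map_subtype_top]
  -- extend to orthonormal basis of E
  set v : Fin q → E := fun t => if h : (t : ℕ) < k then w ⟨t, h⟩ else 0 with hv
  set sIdx : Set (Fin q) := {t | (t : ℕ) < k} with hsIdx
  have hvo : Orthonormal ℝ (sIdx.restrict v) := by
    have : sIdx.restrict v = w ∘ (fun t : sIdx => (⟨(t : Fin q), t.2⟩ : Fin k)) := by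
      funext t
      simp only [Set.restrict_apply, hv, Function.comp_apply]
      exact dif_pos t.2
    rw [this]
    apply hwo.comp
    intro t1 t2 h
    simp only at h
    exact Subtype.ext (Fin.ext (by simpa [Fin.ext_iff] using h))
  have hcard : finrank ℝ E = Fintype.card (Fin q) := by
    rw [Fintype.card_fin]
    exact finrank_euclideanSpace_fin
  obtain ⟨bb, hbb⟩ := hvo.exists_orthonormalBasis_extension_of_card_eq hcard
  -- the matrix with columns bb ∘ castLE
  set A : Matrix (Fin q) (Fin r) ℝ := Matrix.of (fun t l => bb (Fin.castLE hrq l) t) with hAdef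
  have hbbo := bb.orthonormal
  rw [orthonormal_iff_ite] at hbbo
  have hATA : Aᵀ * A = 1 := by
    ext l m
    have h1 : (Aᵀ * A) l m = ∑ t, bb (Fin.castLE hrq l) t * bb (Fin.castLE hrq m) t := by
      simp [Matrix.mul_apply, hAdef, Matrix.transpose_apply]
    have h2 : (inner ℝ (bb (Fin.castLE hrq l)) (bb (Fin.castLE hrq m)) : ℝ)
        = ∑ t, bb (Fin.castLE hrq l) t * bb (Fin.castLE hrq m) t := by
      rw [PiLp.inner_apply]
      simp [RCLike.inner_apply, conj_trivial]
      exact Finset.sum_congr rfl fun _ _ => mul_comm _ _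
    rw [h1, ← h2, hbbo, Matrix.one_apply]
    congr 1
    simp [Fin.castLE_inj]
  -- orthogonality of later basis vectors to W
  have horth : ∀ t : Fin q, ¬((t : ℕ) < k) → ∀ x ∈ W, (inner ℝ (bb t) x : ℝ) = 0 := by
    intro t ht x hx
    have hx' : x ∈ Submodule.span ℝ (Set.range w) := by rw [hWspan]; exact hx
    refine Submodule.span_induction (p := fun y _ => (inner ℝ (bb t) y : ℝ) = 0)
      ?_ ?_ ?_ ?_ hx'
    · rintro y ⟨i, rfl⟩
      have hmem : (⟨(i : ℕ), lt_of_lt_of_le i.2 hkq⟩ : Fin q) ∈ sIdx := i.2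
      have hbi : w i = bb ⟨(i : ℕ), lt_of_lt_of_le i.2 hkq⟩ := by
        rw [hbb _ hmem, hv]
        simp only
        rw [dif_pos (show ((⟨(i : ℕ), lt_of_lt_of_le i.2 hkq⟩ : Fin q) : ℕ) < k from i.2)]
      rw [hbi, hbbo, if_neg]
      intro hcontra
      apply ht
      rw [hcontra]
      exact i.2
    · exact inner_zero_right _
    · intro x y _ _ ihx ihy; rw [inner_add_right, ihx, ihy, add_zero]
    · intro a x _ ih; rw [real_inner_smul_right, ih, mul_zero]
  -- projection formula
  have hproj : ∀ i : Fin s,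
      ∑ l : Fin r, (inner ℝ (bb (Fin.castLE hrq l)) (row i) : ℝ) • bb (Fin.castLE hrq l)
        = row i := by
    intro i
    have hmem : row i ∈ W := Submodule.subset_span ⟨i, rfl⟩
    have hall := bb.sum_repr' (row i)
    have hvanish : ∀ t : Fin q, t ∉ Finset.univ.map (Fin.castLEEmb hrq) →
        (inner ℝ (bb t) (row i) : ℝ) • bb t = 0 := by
      intro t htn
      have hnt : ¬ ((t : ℕ) < k) := by
        intro hlt
        apply htn
        rw [Finset.mem_map]
        exact ⟨⟨(t : ℕ), lt_of_lt_of_le hlt hkr⟩, Finset.mem_univ _, Fin.ext rfl⟩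
      rw [horth t hnt _ hmem, zero_smul]
    calc ∑ l : Fin r, (inner ℝ (bb (Fin.castLE hrq l)) (row i) : ℝ) • bb (Fin.castLE hrq l)
        = ∑ t ∈ Finset.univ.map (Fin.castLEEmb hrq),
            (inner ℝ (bb t) (row i) : ℝ) • bb t := by
          rw [Finset.sum_map]
          apply Finset.sum_congr rfl; intros; rfl
      _ = ∑ t : Fin q, (inner ℝ (bb t) (row i) : ℝ) • bb t :=
          Finset.sum_subset (Finset.subset_univ _) (fun t _ htn => hvanish t htn)
      _ = row i := hall
  -- matrix identity C * A * Aᵀ = C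
  have hfact : C * A * Aᵀ = C := by
    ext i j
    have hx := congrArg (WithLp.linearEquiv 2 ℝ (Fin q → ℝ)) (hproj i)
    rw [map_sum] at hx
    simp only [_root_.map_smul] at hx
    have hxj := congrFun hx j
    rw [Finset.sum_apply] at hxj
    have hrowj : ∀ t, (WithLp.linearEquiv 2 ℝ (Fin q → ℝ)) (row i) t = C i t := by
      intro t; rfl
    have hbbj : ∀ (x : E) (t : Fin q), (WithLp.linearEquiv 2 ℝ (Fin q → ℝ)) x t = x t := by
      intro x t; rfl
    rw [Matrix.mul_apply]
    calc ∑ l, (C * A) i l * Aᵀ l j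
        = ∑ l, (inner ℝ (bb (Fin.castLE hrq l)) (row i) : ℝ) * bb (Fin.castLE hrq l) j := by
          apply Finset.sum_congr rfl; intro l _
          rw [Matrix.mul_apply, Matrix.transpose_apply]
          congr 1
      _ = C i j := hxj
  refine ⟨C * A, A, ?_, hATA, ?_⟩
  · have heq := frob_mul_orth (C * A) A hATA
    rw [hfact] at heq
    rw [← heq]
    exact hfro
  · rw [hfact]


end Aux

theorem stmt16 {s q r : ℕ} (hrs : r ≤ s) (hrq : r ≤ q) :
    ({C : Matrix (Fin s) (Fin q) ℝ |
        ∃ (D : Matrix (Fin s) (Fin r) ℝ) (A : Matrix (Fin q) (Fin r) ℝ),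
          frob D ≤ 1 ∧ Aᵀ * A = 1 ∧ C = D * Aᵀ} =
      {C : Matrix (Fin s) (Fin q) ℝ | C.rank ≤ r ∧ frob C ≤ 1}) ∧
    ∀ (D1 D2 : Matrix (Fin s) (Fin r) ℝ) (A1 A2 : Matrix (Fin q) (Fin r) ℝ),
      frob D1 ≤ 1 → frob D2 ≤ 1 → A1ᵀ * A1 = 1 → A2ᵀ * A2 = 1 →
      frob (D1 * A1ᵀ - D2 * A2ᵀ) ≤
          opN (A1 * A1ᵀ - A2 * A2ᵀ) + frob (D1 * A1ᵀ * A2 - D2) ∧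
      opN (A1 * A1ᵀ - A2 * A2ᵀ) + frob (D1 * A1ᵀ * A2 - D2) ≤
          opN (A1 * A1ᵀ - A2 * A2ᵀ) + frob (D1 - D2) +
            frob D1 * opN (A1ᵀ * A2 - 1) := by
  constructor
  · ext C
    simp only [Set.mem_setOf_eq]
    constructor
    · rintro ⟨D, A, hD, hA, rfl⟩
      refine ⟨le_trans (Matrix.rank_mul_le_left D Aᵀ) (Matrix.rank_le_width D), ?_⟩
      rw [Aux.frob_mul_orth D A hA]; exact hD
    · rintro ⟨h1, h2⟩
      exact Aux.surj hrq C h1 h2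
  · intro D1 D2 A1 A2 hD1 hD2 hA1 hA2
    constructor
    · have hid : D1 * A1ᵀ - D2 * A2ᵀ =
          (D1 * A1ᵀ) * (A1 * A1ᵀ - A2 * A2ᵀ) + (D1 * A1ᵀ * A2 - D2) * A2ᵀ := by
        have e1 : (D1 * A1ᵀ) * (A1 * A1ᵀ) = D1 * A1ᵀ := by
          rw [Matrix.mul_assoc D1, ← Matrix.mul_assoc A1ᵀ, hA1, Matrix.one_mul]
        have e2 : (D1 * A1ᵀ) * (A2 * A2ᵀ) = (D1 * A1ᵀ * A2) * A2ᵀ :=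
          (Matrix.mul_assoc _ _ _).symm
        rw [Matrix.mul_sub, e1, e2, Matrix.sub_mul]
        abel
      rw [hid]
      refine le_trans (Aux.frob_add_le _ _) ?_
      have t1 : frob ((D1 * A1ᵀ) * (A1 * A1ᵀ - A2 * A2ᵀ)) ≤ opN (A1 * A1ᵀ - A2 * A2ᵀ) := by
        refine le_trans (Aux.frob_mul_le _ _) ?_
        rw [Aux.frob_mul_orth D1 A1 hA1]
        calc frob D1 * opN (A1 * A1ᵀ - A2 * A2ᵀ) ≤ 1 * opN (A1 * A1ᵀ - A2 * A2ᵀ) :=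
              mul_le_mul_of_nonneg_right hD1 (Aux.opN_nonneg _)
          _ = opN (A1 * A1ᵀ - A2 * A2ᵀ) := one_mul _
      have t2 : frob ((D1 * A1ᵀ * A2 - D2) * A2ᵀ) = frob (D1 * A1ᵀ * A2 - D2) :=
        Aux.frob_mul_orth _ A2 hA2
      rw [t2]
      exact add_le_add_left t1 _
    · have hid2 : D1 * A1ᵀ * A2 - D2 = (D1 - D2) + D1 * (A1ᵀ * A2 - 1) := by
        rw [Matrix.mul_sub, Matrix.mul_one, Matrix.mul_assoc]
        abel
      have h3 : frob (D1 * A1ᵀ * A2 - D2) ≤ frob (D1 - D2) + frob D1 * opN (A1ᵀ * A2 - 1) := by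
        rw [hid2]
        refine le_trans (Aux.frob_add_le _ _) ?_
        exact add_le_add_right (Aux.frob_mul_le _ _) _
      linarith
end
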